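/- arXiv:2602.12121 — 5 statements merged into one kernel-verified Lean document; each statement's English description precedes it below -/
import Mathlib

section
/- For complex matrices A, B of compatible sizes, the block-circulant embedding is multiplicative with respect to the tensor T-product: bcirc(𝒜 * 𝒝) = bcirc(𝒜) · bcirc(𝒝), where 𝒜 * 𝒝 := fold(bcirc(𝒜)·unfold(𝒝)). -/
open Matrix

/-- Block-circulant embedding of a third-order tensor given by its frontal slices. -/
def bcirc {m n p : ℕ} (A : Fin p → Matrix (Fin m) (Fin n) ℂ) :
    Matrix (Fin p × Fin m) (Fin p × Fin n) ℂ :=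
  Matrix.of fun x y => A (x.1 - y.1) x.2 y.2

/-- Unfolding of a tensor: stacking of its frontal slices. -/
def unfold {n s p : ℕ} (B : Fin p → Matrix (Fin n) (Fin s) ℂ) :
    Matrix (Fin p × Fin n) (Fin s) ℂ :=
  Matrix.of fun x c => B x.1 x.2 c

/-- The T-product `𝒜 * 𝒝 = fold (bcirc 𝒜 · unfold 𝒝)`, expressed slice-wise
(`fold` is the inverse of `unfold`). -/
noncomputable def tProd {m n s p : ℕ} (A : Fin p → Matrix (Fin m) (Fin n) ℂ)
    (B : Fin p → Matrix (Fin n) (Fin s) ℂ) : Fin p → Matrix (Fin m) (Fin s) ℂ :=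
  fun k => Matrix.of fun r c => (bcirc A * unfold B) (k, r) c

/-- the block-circulant embedding is multiplicative with respect to
the tensor T-product: `bcirc (𝒜 * 𝒝) = bcirc 𝒜 ⬝ bcirc 𝒝`. -/
theorem bcirc_tProd {m n s p : ℕ} (A : Fin p → Matrix (Fin m) (Fin n) ℂ)
    (B : Fin p → Matrix (Fin n) (Fin s) ℂ) :
    bcirc (tProd A B) = bcirc A * bcirc B := by
  rcases p with _ | p
  · ext ⟨i, r⟩
    exact i.elim0
  ext ⟨i, r⟩ ⟨j, c⟩
  simp only [bcirc, tProd, unfold, Matrix.mul_apply, Matrix.of_apply]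
  apply Fintype.sum_equiv ((Equiv.addRight j).prodCongr (Equiv.refl (Fin n)))
  intro x
  simp [sub_sub, add_comm]
end

section
/- Symmetry of the geometric mean: for positive definite Hermitian matrices A, B ∈ ℂ^{n×n}, A^{1/2}(A^{-1/2} B A^{-1/2})^{1/2} A^{1/2} = B^{1/2}(B^{-1/2} A B^{-1/2})^{1/2} B^{1/2}; i.e., A # B = B # A. -/
open Matrix
open scoped ComplexOrder

/-- symmetry of the geometric mean: for positive definite Hermitian
`A, B`, `A^{1/2}(A^{-1/2} B A^{-1/2})^{1/2} A^{1/2} = B^{1/2}(B^{-1/2} A B^{-1/2})^{1/2} B^{1/2}`,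
i.e. `A # B = B # A`. Here `SA, SB` are the positive definite square roots of `A, B`,
`M1` that of `SA⁻¹ B SA⁻¹`, and `M2` that of `SB⁻¹ A SB⁻¹`. -/
theorem geomMean_comm {n : ℕ} (A B SA SB M1 M2 : Matrix (Fin n) (Fin n) ℂ)
    (hA : A.PosDef) (hB : B.PosDef)
    (hSA : SA.PosDef) (hSA2 : SA * SA = A)
    (hSB : SB.PosDef) (hSB2 : SB * SB = B)
    (hM1 : M1.PosDef) (hM12 : M1 * M1 = SA⁻¹ * B * SA⁻¹)
    (hM2 : M2.PosDef) (hM22 : M2 * M2 = SB⁻¹ * A * SB⁻¹) :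
    SA * M1 * SA = SB * M2 * SB := by
  have hdSA : IsUnit SA.det := (Matrix.isUnit_iff_isUnit_det SA).mp hSA.isUnit
  have hdSB : IsUnit SB.det := (Matrix.isUnit_iff_isUnit_det SB).mp hSB.isUnit
  have hdM2 : IsUnit M2.det := (Matrix.isUnit_iff_isUnit_det M2).mp hM2.isUnit
  set Y2 : Matrix (Fin n) (Fin n) ℂ := SB * M2 * SB with hY2
  set X : Matrix (Fin n) (Fin n) ℂ := SA⁻¹ * Y2 * SA⁻¹ with hX
  -- Y2 is positive semidefinite
  have hY2ps : Y2.PosSemidef := by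
    have := hM2.posSemidef.mul_mul_conjTranspose_same SB
    rwa [hSB.1.eq] at this
  -- X is positive semidefinite
  have hXps : X.PosSemidef := by
    have := hY2ps.conjTranspose_mul_mul_same SA⁻¹
    rwa [(hSA.1.inv).eq] at this
  have cSA : ∀ C, SA * (SA⁻¹ * C) = C := fun C => Matrix.mul_nonsing_inv_cancel_left _ _ hdSA
  have cSA' : ∀ C, SA⁻¹ * (SA * C) = C := fun C => Matrix.nonsing_inv_mul_cancel_left _ _ hdSA
  have cSB : ∀ C, SB * (SB⁻¹ * C) = C := fun C => Matrix.mul_nonsing_inv_cancel_left _ _ hdSB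
  have cSB' : ∀ C, SB⁻¹ * (SB * C) = C := fun C => Matrix.nonsing_inv_mul_cancel_left _ _ hdSB
  have cM2 : ∀ C, M2 * (M2⁻¹ * C) = C := fun C => Matrix.mul_nonsing_inv_cancel_left _ _ hdM2
  have cM2' : ∀ C, M2⁻¹ * (M2 * C) = C := fun C => Matrix.nonsing_inv_mul_cancel_left _ _ hdM2
  have iSA : SA * SA⁻¹ = 1 := Matrix.mul_nonsing_inv _ hdSA
  have iSA' : SA⁻¹ * SA = 1 := Matrix.nonsing_inv_mul _ hdSA
  have iSB : SB * SB⁻¹ = 1 := Matrix.mul_nonsing_inv _ hdSB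
  have iSB' : SB⁻¹ * SB = 1 := Matrix.nonsing_inv_mul _ hdSB
  have iM2 : M2 * M2⁻¹ = 1 := Matrix.mul_nonsing_inv _ hdM2
  have iM2' : M2⁻¹ * M2 = 1 := Matrix.nonsing_inv_mul _ hdM2
  -- A = SB * (M2 * M2) * SB
  have hAeq : SB * (M2 * M2) * SB = A := by
    rw [hM22]
    simp only [Matrix.mul_assoc, cSB, cSB', iSB, iSB', Matrix.mul_one]
  -- A⁻¹ expressed via SB, M2
  have hAinv : A⁻¹ = SB⁻¹ * (M2⁻¹ * (M2⁻¹ * SB⁻¹)) := by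
    rw [← hAeq, Matrix.mul_inv_rev, Matrix.mul_inv_rev, Matrix.mul_inv_rev]
    simp only [Matrix.mul_assoc]
  -- Riccati: Y2 * A⁻¹ * Y2 = B
  have hRic : Y2 * A⁻¹ * Y2 = B := by
    rw [hY2, hAinv, ← hSB2]
    simp only [Matrix.mul_assoc, cSB, cSB', cM2, cM2', iSB, iSB', iM2, iM2', Matrix.mul_one]
  -- SA⁻¹ * SA⁻¹ = A⁻¹
  have hSAinv : SA⁻¹ * SA⁻¹ = A⁻¹ := by rw [← hSA2, Matrix.mul_inv_rev]
  -- X ^ 2 = M1 ^ 2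
  have hsq : X ^ 2 = M1 ^ 2 := by
    rw [pow_two, pow_two, hM12, ← hRic, hX]
    rw [← hSAinv]
    simp only [Matrix.mul_assoc]
  -- hence X = M1
  have hXM1 : X = M1 :=
    open scoped MatrixOrder in
    (CFC.sq_eq_sq_iff X M1 hXps.nonneg hM1.posSemidef.nonneg).mp hsq
  calc SA * M1 * SA = SA * X * SA := by rw [hXM1]
    _ = SB * M2 * SB := by
        rw [hX, hY2]
        simp only [Matrix.mul_assoc, cSA, cSA', iSA, iSA', Matrix.mul_one]
end

section
/- Involutions with accretive-compatible structure are trivial: let X, Y ∈ ℂ^{n×n} be strictly accretive matrices such that (Y X^{-1})² = I. Then Y X^{-1} = I, i.e., Y = X. -/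
open Matrix

lemma accretive_det_ne_zero {n : ℕ} (X : Matrix (Fin n) (Fin n) ℂ)
    (hX : ∀ x : Fin n → ℂ, x ≠ 0 → 0 < (star x ⬝ᵥ X.mulVec x).re) :
    X.det ≠ 0 := by
  intro hdet
  obtain ⟨v, hv, hXv⟩ := (Matrix.exists_mulVec_eq_zero_iff).2 hdet
  have := hX v hv
  rw [hXv] at this
  simp at this

/-- let `X, Y` be strictly accretive matrices with `(Y X⁻¹)² = I`.
Then `Y X⁻¹ = I`, i.e. `Y = X`. -/
theorem involution_accretive_trivial {n : ℕ} (X Y : Matrix (Fin n) (Fin n) ℂ)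
    (hX : ∀ x : Fin n → ℂ, x ≠ 0 → 0 < (star x ⬝ᵥ X.mulVec x).re)
    (hY : ∀ x : Fin n → ℂ, x ≠ 0 → 0 < (star x ⬝ᵥ Y.mulVec x).re)
    (h : (Y * X⁻¹) ^ 2 = 1) :
    Y * X⁻¹ = 1 ∧ Y = X := by
  set M := Y * X⁻¹ with hM
  have hXdet : IsUnit X.det := isUnit_iff_ne_zero.2 (accretive_det_ne_zero X hX)
  -- M + 1 is invertible
  have hMdet : (M + 1).det ≠ 0 := by
    intro hdet
    obtain ⟨v, hv, hMv⟩ := (Matrix.exists_mulVec_eq_zero_iff).2 hdet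
    rw [Matrix.add_mulVec, Matrix.one_mulVec] at hMv
    have hMv' : M.mulVec v = -v := eq_neg_of_add_eq_zero_left hMv
    set η := X⁻¹.mulVec v with hη
    have hXη : X.mulVec η = v := by
      rw [hη, Matrix.mulVec_mulVec, Matrix.mul_nonsing_inv X hXdet, Matrix.one_mulVec]
    have hηne : η ≠ 0 := by
      intro h0
      rw [h0, Matrix.mulVec_zero] at hXη
      exact hv hXη.symm
    have hYη : Y.mulVec η = -(X.mulVec η) := by
      rw [hη, Matrix.mulVec_mulVec, ← hM]
      rw [hXη] at *
      rw [hMv', hXη]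
    have h1 := hX η hηne
    have h2 := hY η hηne
    rw [hYη, dotProduct_neg, Complex.neg_re] at h2
    linarith
  have hMunit : IsUnit (M + 1).det := isUnit_iff_ne_zero.2 hMdet
  have key : (M - 1) * (M + 1) = 0 := by
    have : (M - 1) * (M + 1) = M ^ 2 - 1 := by noncomm_ring
    rw [this, h]
    simp
  have hM1 : M = 1 := by
    have := congrArg (fun A => A * (M + 1)⁻¹) key
    rw [Matrix.mul_nonsing_inv_cancel_right _ _ hMunit, zero_mul] at this
    exact sub_eq_zero.mp this
  refine ⟨hM1, ?_⟩
  have : M * X = X := by rw [hM1, one_mul]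
  rw [hM, Matrix.mul_assoc, Matrix.nonsing_inv_mul X hXdet, mul_one] at this
  exact this
end

section
/- Ky–Fan majorization for Hermitian matrices: for Hermitian X, Y ∈ ℂ^{n×n}, the eigenvalue vector of X + Y is majorized by the sum of the decreasingly ordered eigenvalue vectors of X and Y: λ(X + Y) ≺ λ↓(X) + λ↓(Y). -/
open Matrix

/-- `sortDesc u` is `u` rearranged in nonincreasing order. -/
noncomputable def sortDesc {n : ℕ} (u : Fin n → ℝ) : Fin n → ℝ :=
  fun i => u (Tuple.sort u (Fin.rev i))

/-- Majorization `u ≺ v`: every partial sum of the decreasingly sorted `u` is bounded by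
the corresponding partial sum of `v`, with equal total sums. -/
def Majorizes {n : ℕ} (u v : Fin n → ℝ) : Prop :=
  (∀ k : ℕ,
      ∑ i : Fin n, (if (i : ℕ) < k then sortDesc u i else 0) ≤
        ∑ i : Fin n, (if (i : ℕ) < k then sortDesc v i else 0)) ∧
    ∑ i, u i = ∑ i, v i

/-- The permutation realizing `sortDesc`. -/
noncomputable def descPerm {n : ℕ} (u : Fin n → ℝ) : Equiv.Perm (Fin n) :=
  (Fin.revPerm).trans (Tuple.sort u)

lemma sortDesc_eq_comp {n : ℕ} (u : Fin n → ℝ) (i : Fin n) :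
    sortDesc u i = u (descPerm u i) := rfl

lemma sortDesc_antitone {n : ℕ} (u : Fin n → ℝ) : Antitone (sortDesc u) := by
  intro i j hij
  exact Tuple.monotone_sort u (show Fin.rev j ≤ Fin.rev i from Fin.rev_le_rev.mpr hij)

lemma sum_sortDesc {n : ℕ} (u : Fin n → ℝ) : ∑ i, sortDesc u i = ∑ i, u i := by
  simpa [sortDesc_eq_comp] using Equiv.sum_comp (descPerm u) u

lemma sortDesc_of_antitone {n : ℕ} {v : Fin n → ℝ} (hv : Antitone v) : sortDesc v = v := by
  have h1 : Monotone (v ∘ (Fin.revPerm : Equiv.Perm (Fin n))) := by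
    intro i j hij
    exact hv (Fin.rev_le_rev.mpr hij)
  have h2 := Tuple.unique_monotone (Tuple.monotone_sort v) h1
  funext i
  have := congrFun h2 (Fin.rev i)
  simpa [sortDesc] using this

lemma card_filter_lt {n : ℕ} (k : ℕ) :
    (Finset.univ.filter (fun i : Fin n => (i : ℕ) < k)).card = min k n := by
  have h : (Finset.univ.filter (fun i : Fin n => (i : ℕ) < k)) =
      (Finset.range (min k n)).attachFin
        (fun m hm => lt_of_lt_of_le (Finset.mem_range.mp hm) (min_le_right _ _)) := by
    ext i
    simp [Nat.lt_min, i.isLt]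
  rw [h, Finset.card_attachFin, Finset.card_range]

lemma sum_ite_one {n : ℕ} (k : ℕ) (hk : k ≤ n) :
    ∑ i : Fin n, (if (i : ℕ) < k then (1 : ℝ) else 0) = k := by
  rw [Finset.sum_boole]
  rw [card_filter_lt]
  simp [min_eq_left hk]

/-- Key rearrangement bound: a `[0,1]`-valued weight vector of total mass `k`
pairs against `v` to at most the sum of the `k` largest entries of `v`. -/
lemma inner_sum_le {n : ℕ} (v : Fin n → ℝ) (c : Fin n → ℝ)
    (hc0 : ∀ i, 0 ≤ c i) (hc1 : ∀ i, c i ≤ 1) (k : ℕ) (hk : k ≤ n)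
    (hsum : ∑ i, c i = k) :
    ∑ i, v i * c i ≤ ∑ i : Fin n, (if (i : ℕ) < k then sortDesc v i else 0) := by
  set e := descPerm v with he
  have hre : ∑ i, v i * c i = ∑ i, sortDesc v i * c (e i) := by
    rw [← Equiv.sum_comp e (fun i => v i * c i)]
    simp [sortDesc_eq_comp, he]
  have hdsum : ∑ i, c (e i) = (k : ℝ) := by
    rw [Equiv.sum_comp e c]; exact hsum
  rcases Nat.eq_zero_or_pos k with hk0 | hkpos
  · subst hk0
    have hzero : ∀ i ∈ Finset.univ, c i = 0 := by
      rw [← Finset.sum_eq_zero_iff_of_nonneg (fun i _ => hc0 i)]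
      simpa using hsum
    simp only [Nat.not_lt_zero, if_false, Finset.sum_const_zero]
    rw [hre]
    apply le_of_eq
    apply Finset.sum_eq_zero
    intro i _
    rw [hzero (e i) (Finset.mem_univ _), mul_zero]
  · have hK : k - 1 < n := by omega
    set K : Fin n := ⟨k - 1, hK⟩ with hKdef
    set t := sortDesc v K with ht
    have hterm : ∀ i : Fin n,
        sortDesc v i * c (e i) - (if (i : ℕ) < k then sortDesc v i else 0)
          ≤ t * (c (e i) - (if (i : ℕ) < k then 1 else 0)) := by
      intro i
      by_cases h : (i : ℕ) < k
      · simp only [if_pos h]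
        have hle : i ≤ K := by
          simp only [hKdef]
          exact Fin.mk_le_mk.mpr (by omega) |>.trans_eq rfl
        have hμ : t ≤ sortDesc v i := sortDesc_antitone v hle
        nlinarith [hc1 (e i), hc0 (e i)]
      · simp only [if_neg h]
        have hle : K ≤ i := by
          simp only [hKdef]
          exact Fin.mk_le_mk.mpr (by omega) |>.trans_eq rfl
        have hμ : sortDesc v i ≤ t := sortDesc_antitone v hle
        nlinarith [hc0 (e i)]
    have hsumle := Finset.sum_le_sum (fun i (_ : i ∈ Finset.univ) => hterm i)
    have hrhs : ∑ i : Fin n, t * (c (e i) - (if (i : ℕ) < k then 1 else 0)) = 0 := by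
      rw [← Finset.mul_sum, Finset.sum_sub_distrib, hdsum, sum_ite_one k hk, sub_self, mul_zero]
    rw [Finset.sum_sub_distrib, hrhs] at hsumle
    rw [hre]
    linarith

lemma re_sum_normSq_col {n : ℕ} {W : Matrix (Fin n) (Fin n) ℂ}
    (hW : star W * W = 1) (i : Fin n) :
    ∑ j, Complex.normSq (W j i) = 1 := by
  have h1 : (star W * W) i i = 1 := by rw [hW]; simp
  have h2 : (star W * W) i i = ((∑ j, Complex.normSq (W j i) : ℝ) : ℂ) := by
    rw [Matrix.mul_apply]
    push_cast
    refine Finset.sum_congr rfl fun j _ => ?_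
    rw [Matrix.star_apply, Complex.star_def, ← Complex.normSq_eq_conj_mul_self]
  rw [h2] at h1
  exact_mod_cast h1

lemma re_sum_normSq_row {n : ℕ} {W : Matrix (Fin n) (Fin n) ℂ}
    (hW : W * star W = 1) (j : Fin n) :
    ∑ i, Complex.normSq (W j i) = 1 := by
  have h1 : (W * star W) j j = 1 := by rw [hW]; simp
  have h2 : (W * star W) j j = ((∑ i, Complex.normSq (W j i) : ℝ) : ℂ) := by
    rw [Matrix.mul_apply]
    push_cast
    refine Finset.sum_congr rfl fun i _ => ?_
    rw [Matrix.star_apply, Complex.star_def, Complex.mul_conj]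
  rw [h2] at h1
  exact_mod_cast h1

/-- Ky-Fan type bound: the sum over any index set `S` of diagonal entries of a
unitary conjugate of a Hermitian `X` is at most the sum of the `|S|` largest
eigenvalues of `X`. -/
lemma sum_diag_le {n : ℕ} {X : Matrix (Fin n) (Fin n) ℂ} (hX : X.IsHermitian)
    (U : Matrix (Fin n) (Fin n) ℂ) (hU : U ∈ Matrix.unitaryGroup (Fin n) ℂ)
    (S : Finset (Fin n)) :
    ∑ i ∈ S, Complex.re ((star U * X * U) i i)
      ≤ ∑ i : Fin n, (if (i : ℕ) < S.card then sortDesc hX.eigenvalues i else 0) := by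
  classical
  set V : Matrix (Fin n) (Fin n) ℂ := (hX.eigenvectorUnitary : Matrix (Fin n) (Fin n) ℂ) with hV
  have hVmem : V ∈ Matrix.unitaryGroup (Fin n) ℂ := hX.eigenvectorUnitary.2
  set W : Matrix (Fin n) (Fin n) ℂ := star V * U with hWdef
  have hWmem : W ∈ Matrix.unitaryGroup (Fin n) ℂ := by
    exact mul_mem (Unitary.star_mem hVmem) hU
  have hW1 : star W * W = 1 := (Matrix.mem_unitaryGroup_iff'.mp hWmem)
  have hW2 : W * star W = 1 := (Matrix.mem_unitaryGroup_iff.mp hWmem)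
  set D : Matrix (Fin n) (Fin n) ℂ := diagonal (RCLike.ofReal ∘ hX.eigenvalues) with hD
  have hconj : star U * X * U = star W * D * W := by
    rw [hX.spectral_theorem]
    simp only [Unitary.conjStarAlgAut_apply, hWdef, hD, StarMul.star_mul, star_star, Matrix.mul_assoc, ← hV]
  have entry : ∀ i, Complex.re ((star W * D * W) i i)
      = ∑ j, hX.eigenvalues j * Complex.normSq (W j i) := by
    intro i
    have : (star W * D * W) i i = ((∑ j, hX.eigenvalues j * Complex.normSq (W j i) : ℝ) : ℂ) := by
      rw [Matrix.mul_apply]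
      push_cast
      refine Finset.sum_congr rfl fun j _ => ?_
      rw [Matrix.mul_diagonal, Matrix.star_apply]
      have : (starRingEnd ℂ) (W j i) * W j i = (Complex.normSq (W j i) : ℂ) := by
        rw [← Complex.normSq_eq_conj_mul_self]
      push_cast
      calc (starRingEnd ℂ) (W j i) * ((hX.eigenvalues j : ℂ)) * W j i
          = (hX.eigenvalues j : ℂ) * ((starRingEnd ℂ) (W j i) * W j i) := by ring
        _ = (hX.eigenvalues j : ℂ) * (Complex.normSq (W j i) : ℂ) := by rw [this]
    rw [this, Complex.ofReal_re]
  set c : Fin n → ℝ := fun j => ∑ i ∈ S, Complex.normSq (W j i) with hc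
  have hc0 : ∀ j, 0 ≤ c j := fun j => Finset.sum_nonneg fun i _ => Complex.normSq_nonneg _
  have hc1 : ∀ j, c j ≤ 1 := by
    intro j
    calc c j ≤ ∑ i : Fin n, Complex.normSq (W j i) :=
          Finset.sum_le_sum_of_subset_of_nonneg (Finset.subset_univ S)
            (fun i _ _ => Complex.normSq_nonneg _)
      _ = 1 := re_sum_normSq_row hW2 j
  have hcard : S.card ≤ n := by
    simpa using Finset.card_le_univ S
  have hcsum : ∑ j, c j = (S.card : ℝ) := by
    rw [Finset.sum_comm]
    rw [Finset.sum_congr rfl fun i _ => re_sum_normSq_col hW1 i]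
    simp
  have hlhs : ∑ i ∈ S, Complex.re ((star U * X * U) i i)
      = ∑ j, hX.eigenvalues j * c j := by
    rw [Finset.sum_congr rfl fun i _ => by rw [hconj]]
    rw [Finset.sum_congr rfl fun i _ => entry i]
    rw [Finset.sum_comm]
    exact Finset.sum_congr rfl fun j _ => by rw [Finset.mul_sum]
  rw [hlhs]
  exact inner_sum_le hX.eigenvalues c hc0 hc1 S.card hcard hcsum

lemma sum_eigenvalues_eq_re_trace {n : ℕ} {X : Matrix (Fin n) (Fin n) ℂ}
    (hX : X.IsHermitian) :
    ∑ i, hX.eigenvalues i = Complex.re (Matrix.trace X) := by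
  have h : Matrix.trace X = ∑ i, ((hX.eigenvalues i : ℂ)) := by
    conv_lhs => rw [hX.spectral_theorem, Unitary.conjStarAlgAut_apply]
    rw [Matrix.trace_mul_cycle]
    rw [show (star (hX.eigenvectorUnitary : Matrix (Fin n) (Fin n) ℂ)) *
        (hX.eigenvectorUnitary : Matrix (Fin n) (Fin n) ℂ) = 1 from
      Matrix.mem_unitaryGroup_iff'.mp hX.eigenvectorUnitary.2]
    rw [one_mul, Matrix.trace_diagonal]
    rfl
  rw [h]
  simp

/-- Ky–Fan majorization: for Hermitian `X, Y`, the eigenvalues of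
`X + Y` are majorized by the sum of the decreasingly ordered eigenvalue vectors of
`X` and `Y`. -/
theorem kyFan_majorization {n : ℕ} (X Y : Matrix (Fin n) (Fin n) ℂ)
    (hX : X.IsHermitian) (hY : Y.IsHermitian) :
    Majorizes ((hX.add hY).eigenvalues)
      (sortDesc hX.eigenvalues + sortDesc hY.eigenvalues) := by
  classical
  set hZ := hX.add hY with hZdef
  set Z := X + Y with hZmat
  -- total sums
  have htot : ∑ i, hZ.eigenvalues i = ∑ i, hX.eigenvalues i + ∑ i, hY.eigenvalues i := by
    rw [sum_eigenvalues_eq_re_trace hZ, sum_eigenvalues_eq_re_trace hX,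
      sum_eigenvalues_eq_re_trace hY]
    rw [show Matrix.trace Z = Matrix.trace X + Matrix.trace Y from Matrix.trace_add X Y]
    simp
  have hanti : Antitone (sortDesc hX.eigenvalues + sortDesc hY.eigenvalues) := by
    intro i j hij
    exact add_le_add (sortDesc_antitone _ hij) (sortDesc_antitone _ hij)
  have hsd : sortDesc (sortDesc hX.eigenvalues + sortDesc hY.eigenvalues)
      = sortDesc hX.eigenvalues + sortDesc hY.eigenvalues := sortDesc_of_antitone hanti
  constructor
  · intro k
    rw [hsd]
    have hsplit : ∑ i : Fin n, (if (i : ℕ) < k then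
          (sortDesc hX.eigenvalues + sortDesc hY.eigenvalues) i else 0)
        = (∑ i : Fin n, (if (i : ℕ) < k then sortDesc hX.eigenvalues i else 0))
          + ∑ i : Fin n, (if (i : ℕ) < k then sortDesc hY.eigenvalues i else 0) := by
      rw [← Finset.sum_add_distrib]
      refine Finset.sum_congr rfl fun i _ => ?_
      by_cases h : (i : ℕ) < k <;> simp [h]
    rw [hsplit]
    by_cases hkn : n ≤ k
    · have hall : ∀ (u : Fin n → ℝ), ∑ i : Fin n, (if (i : ℕ) < k then u i else 0) = ∑ i, u i := by
        intro u
        refine Finset.sum_congr rfl fun i _ => ?_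
        rw [if_pos (lt_of_lt_of_le i.isLt hkn)]
      rw [hall, hall, hall, sum_sortDesc, sum_sortDesc, sum_sortDesc]
      exact le_of_eq htot
    · push_neg at hkn
      have hk : k ≤ n := le_of_lt hkn
      -- the top-k indices of Z's eigenvalues
      set T : Finset (Fin n) :=
        (Finset.univ.filter (fun i : Fin n => (i : ℕ) < k)).image (descPerm hZ.eigenvalues) with hT
      have hTcard : T.card = k := by
        rw [hT, Finset.card_image_of_injective _ (descPerm hZ.eigenvalues).injective,
          card_filter_lt, min_eq_left hk]
      have hlhs : ∑ i : Fin n, (if (i : ℕ) < k then sortDesc hZ.eigenvalues i else 0)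
          = ∑ j ∈ T, hZ.eigenvalues j := by
        rw [← Finset.sum_filter, hT,
          Finset.sum_image (fun a _ b _ h => (descPerm hZ.eigenvalues).injective h)]
        exact Finset.sum_congr rfl fun i _ => sortDesc_eq_comp _ i
      set U : Matrix (Fin n) (Fin n) ℂ := (hZ.eigenvectorUnitary : Matrix (Fin n) (Fin n) ℂ) with hU
      have hUmem : U ∈ Matrix.unitaryGroup (Fin n) ℂ := hZ.eigenvectorUnitary.2
      have hdiag : star U * Z * U = diagonal (RCLike.ofReal ∘ hZ.eigenvalues) :=
        by have := hZ.conjStarAlgAut_star_eigenvectorUnitary; simpa [Unitary.conjStarAlgAut_apply] using this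
      have heig : ∀ j, hZ.eigenvalues j = Complex.re ((star U * Z * U) j j) := by
        intro j
        rw [hdiag]
        simp [Matrix.diagonal_apply_eq]
      have hadd : ∀ j, Complex.re ((star U * Z * U) j j)
          = Complex.re ((star U * X * U) j j) + Complex.re ((star U * Y * U) j j) := by
        intro j
        have : star U * Z * U = star U * X * U + star U * Y * U := by
          rw [hZmat]; noncomm_ring
        rw [this]
        simp [Matrix.add_apply]
      rw [hlhs]
      calc ∑ j ∈ T, hZ.eigenvalues j
          = ∑ j ∈ T, (Complex.re ((star U * X * U) j j) + Complex.re ((star U * Y * U) j j)) := by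
            refine Finset.sum_congr rfl fun j _ => ?_
            rw [heig j, hadd j]
        _ = (∑ j ∈ T, Complex.re ((star U * X * U) j j))
            + ∑ j ∈ T, Complex.re ((star U * Y * U) j j) := Finset.sum_add_distrib
        _ ≤ (∑ i : Fin n, (if (i : ℕ) < k then sortDesc hX.eigenvalues i else 0))
            + ∑ i : Fin n, (if (i : ℕ) < k then sortDesc hY.eigenvalues i else 0) := by
            have h1 := sum_diag_le hX U hUmem T
            have h2 := sum_diag_le hY U hUmem T
            rw [hTcard] at h1 h2
            exact add_le_add h1 h2
  · refine htot.trans ?_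
    have : ∑ i, (sortDesc hX.eigenvalues + sortDesc hY.eigenvalues) i
        = ∑ i, sortDesc hX.eigenvalues i + ∑ i, sortDesc hY.eigenvalues i := by
      simp [Finset.sum_add_distrib]
    rw [this, sum_sortDesc, sum_sortDesc]
end

section
/- Lower bound for phase rank: for a sectorial matrix A ∈ ℂ^{n×n}, prank(A) ≥ min over positive definite Hermitian M of rank(A − M), and this minimum equals min over invertible T ∈ ℂ^{n×n} of rank(T^H A T − I). -/
open Matrix Real
open scoped ComplexOrder

/-- `Bᴴ B` is positive definite when `B` is invertible. -/
lemma posDef_conjTranspose_mul_self_aux {n : ℕ} (B : Matrix (Fin n) (Fin n) ℂ)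
    (hB : IsUnit B.det) : (Bᴴ * B).PosDef := by
  refine Matrix.PosDef.of_dotProduct_mulVec_pos
    (Matrix.posSemidef_conjTranspose_mul_self B).isHermitian fun x hx => ?_
  have hBx : B *ᵥ x ≠ 0 := by
    intro h
    have hinj : Function.Injective B.mulVec :=
      Matrix.mulVec_injective_iff_isUnit.mpr ((Matrix.isUnit_iff_isUnit_det B).mpr hB)
    exact hx (hinj (by simpa using h))
  have key : star x ⬝ᵥ (Bᴴ * B) *ᵥ x = star (B *ᵥ x) ⬝ᵥ (B *ᵥ x) := by
    rw [← Matrix.mulVec_mulVec, Matrix.dotProduct_mulVec, Matrix.vecMul_conjTranspose,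
      star_star]
  rw [key]
  exact Matrix.dotProduct_star_self_pos_iff.mpr hBx

/-- for a sectorial matrix `A = Tᴴ D T` (with `T` invertible,
`D = diag(e^{iφ_k})`, canonical phases `φ_k ∈ (-π, π]` spanning an interval of length
`< π`), the phase rank `prank A = #{k : φ_k ≠ 0}` dominates the minimum of
`rank (A - M)` over positive definite Hermitian `M`, and this minimum equals the
minimum of `rank (Sᴴ A S - I)` over invertible `S`. -/
theorem phaseRank_lower_bound {n : ℕ} (T : Matrix (Fin n) (Fin n) ℂ)
    (hT : IsUnit T.det) (φ : Fin n → ℝ)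
    (hφ : ∀ k, φ k ∈ Set.Ioc (-π) π)
    (hspread : ∀ k l, φ k - φ l < π)
    (A : Matrix (Fin n) (Fin n) ℂ)
    (hA : A = Tᴴ * Matrix.diagonal (fun k => Complex.exp (φ k * Complex.I)) * T) :
    sInf {r : ℕ | ∃ M : Matrix (Fin n) (Fin n) ℂ, M.PosDef ∧ (A - M).rank = r} ≤
        Fintype.card {k : Fin n // φ k ≠ 0} ∧
      sInf {r : ℕ | ∃ M : Matrix (Fin n) (Fin n) ℂ, M.PosDef ∧ (A - M).rank = r} =
        sInf {r : ℕ | ∃ S : Matrix (Fin n) (Fin n) ℂ, IsUnit S.det ∧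
          (Sᴴ * A * S - 1).rank = r} := by
  have hTH : IsUnit Tᴴ.det := by
    rw [Matrix.det_conjTranspose]
    exact hT.star
  constructor
  · -- M = Tᴴ T works
    apply Nat.sInf_le
    refine ⟨Tᴴ * T, posDef_conjTranspose_mul_self_aux T hT, ?_⟩
    have h1 : A - Tᴴ * T =
        Tᴴ * (Matrix.diagonal (fun k => Complex.exp (φ k * Complex.I) - 1)) * T := by
      rw [hA]
      have : (Matrix.diagonal fun k => Complex.exp (φ k * Complex.I) - 1) =
          Matrix.diagonal (fun k => Complex.exp (φ k * Complex.I)) - 1 := by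
        rw [← Matrix.diagonal_one, Matrix.diagonal_sub]
      rw [this, Matrix.mul_sub, Matrix.sub_mul, Matrix.mul_one]
    rw [h1, Matrix.rank_mul_eq_left_of_isUnit_det _ _ hT,
      Matrix.rank_mul_eq_right_of_isUnit_det _ _ hTH, Matrix.rank_diagonal]
    refine Fintype.card_congr (Equiv.subtypeEquivRight fun k => ?_)
    rw [sub_ne_zero, not_iff_not]
    constructor
    · intro h
      rw [Complex.exp_eq_one_iff] at h
      obtain ⟨m, hm⟩ := h
      have : (φ k : ℂ) = (m : ℂ) * (2 * π) := by
        have hm' : (φ k : ℂ) * Complex.I = ((m : ℂ) * (2 * π)) * Complex.I := by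
          rw [hm]; ring
        exact mul_right_cancel₀ Complex.I_ne_zero hm'
      have hφk : φ k = m * (2 * π) := by exact_mod_cast this
      have hm0 : m = 0 := by
        rcases hφ k with ⟨hl, hr⟩
        by_contra hm0
        have hπ : (0 : ℝ) < π := Real.pi_pos
        rcases lt_or_gt_of_ne hm0 with h' | h'
        · have : (m : ℝ) ≤ -1 := by exact_mod_cast Int.le_of_lt_add_one (by simpa using h')
          nlinarith
        · have : (1 : ℝ) ≤ (m : ℝ) := by exact_mod_cast h'
          nlinarith
      rw [hφk, hm0]
      norm_num
    · intro h
      rw [h]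
      simp
  · -- the two sets are equal
    congr 1
    ext r
    simp only [Set.mem_setOf_eq]
    constructor
    · rintro ⟨M, hM, rfl⟩
      have hsq : ∃ C : Matrix (Fin n) (Fin n) ℂ, Cᴴ = C ∧ C * C = M := by
        open scoped MatrixOrder in
        exact ⟨CFC.sqrt M, (CFC.sqrt_nonneg M).posSemidef.isHermitian,
          CFC.sqrt_mul_sqrt_self M hM.posSemidef.nonneg⟩
      obtain ⟨C, hCherm, hCC⟩ := hsq
      have hCdet : IsUnit C.det := by
        have : C.det * C.det = M.det := by rw [← Matrix.det_mul, hCC]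
        have hMdet : M.det ≠ 0 := hM.det_pos.ne'
        refine isUnit_iff_ne_zero.mpr fun h => hMdet ?_
        rw [← this, h, mul_zero]
      have hCinvdet : IsUnit (C⁻¹).det := by
        exact Matrix.isUnit_nonsing_inv_det _ hCdet
      have hCinvH : (C⁻¹)ᴴ = C⁻¹ := by
        rw [Matrix.conjTranspose_nonsing_inv, hCherm]
      refine ⟨C⁻¹, hCinvdet, ?_⟩
      have key : (C⁻¹)ᴴ * A * C⁻¹ - 1 = (C⁻¹)ᴴ * (A - M) * C⁻¹ := by
        rw [Matrix.mul_sub, Matrix.sub_mul]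
        congr 1
        rw [hCinvH, ← hCC, ← Matrix.mul_assoc,
          Matrix.nonsing_inv_mul _ hCdet, Matrix.one_mul,
          Matrix.mul_nonsing_inv _ hCdet]
      rw [key, Matrix.rank_mul_eq_left_of_isUnit_det _ _ hCinvdet,
        Matrix.rank_mul_eq_right_of_isUnit_det _ _ (by rwa [hCinvH])]
    · rintro ⟨S, hS, rfl⟩
      have hSinvdet : IsUnit (S⁻¹).det := by
        exact Matrix.isUnit_nonsing_inv_det _ hS
      refine ⟨(S⁻¹)ᴴ * S⁻¹, posDef_conjTranspose_mul_self_aux _ hSinvdet, ?_⟩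
      have key : A - (S⁻¹)ᴴ * S⁻¹ = (S⁻¹)ᴴ * (Sᴴ * A * S - 1) * S⁻¹ := by
        rw [Matrix.mul_sub, Matrix.sub_mul, Matrix.mul_one]
        congr 1
        rw [Matrix.conjTranspose_nonsing_inv, ← Matrix.mul_assoc, ← Matrix.mul_assoc,
          Matrix.nonsing_inv_mul _ (by rw [Matrix.det_conjTranspose]; exact hS.star),
          Matrix.one_mul, Matrix.mul_assoc, Matrix.mul_nonsing_inv _ hS, Matrix.mul_one]
      have hSHinvdet : IsUnit ((S⁻¹)ᴴ).det := by
        rw [Matrix.det_conjTranspose]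
        exact hSinvdet.star
      rw [key, Matrix.rank_mul_eq_left_of_isUnit_det _ _ hSinvdet,
        Matrix.rank_mul_eq_right_of_isUnit_det _ _ hSHinvdet]
end
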